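/- Let S be a composite set of Q^{r_1} and T a composite set of Q^{r_2}, and suppose at least one of S, T is a subcube. Then S × T is a composite set of Q^{r_1} × Q^{r_2} = Q^{r_1 + r_2}. -/

import Mathlib

/-- The hypercube graph `Q^d` on `{0,1}^d`: two strings are adjacent iff they differ
in exactly one coordinate. -/
def Q (d : ℕ) : SimpleGraph (Fin d → Bool) where
  Adj x y := hammingDist x y = 1
  symm := by constructor; intro x y h; rwa [hammingDist_comm]
  loopless := by constructor; intro x h; simp [hammingDist_self] at h

/-- A `c`-subcube of `Q^r`: the set of all vertices having fixed values on some
`r - c` coordinates. -/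
def IsSubcube (r c : ℕ) (S : Set (Fin r → Bool)) : Prop :=
  ∃ (F : Finset (Fin r)) (val : Fin r → Bool),
    F.card = r - c ∧ S = {w | ∀ i ∈ F, w i = val i}

/-- The neighborhood of a vertex set in `Q^r`. -/
def nbhd (r : ℕ) (A : Set (Fin r → Bool)) : Set (Fin r → Bool) :=
  {v | ∃ a ∈ A, (Q r).Adj v a}

/-- A composite (cubal) set in `Q^r`: a disjoint union of subcubes of strictly
increasing dimensions, each smaller subcube lying in the neighborhood of every
larger one. -/
def IsCompositeSet (r : ℕ) (S : Set (Fin r → Bool)) : Prop :=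
  ∃ (m : ℕ) (c : Fin m → ℕ) (cube : Fin m → Set (Fin r → Bool)),
    StrictMono c ∧
    (∀ i, IsSubcube r (c i) (cube i)) ∧
    Pairwise (fun i j => Disjoint (cube i) (cube j)) ∧
    S = ⋃ i, cube i ∧
    (∀ i j, i < j → cube i ⊆ nbhd r (cube j))

lemma hamming_append {r₁ r₂ : ℕ} (a c : Fin r₁ → Bool) (b d : Fin r₂ → Bool) :
    hammingDist (Fin.append a b) (Fin.append c d) = hammingDist a c + hammingDist b d := by
  simp only [hammingDist, Finset.card_filter]
  rw [Fin.sum_univ_add]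
  simp [Fin.append_left, Fin.append_right]

lemma append_self {r₁ r₂ : ℕ} (w : Fin (r₁ + r₂) → Bool) :
    Fin.append (fun i => w (Fin.castAdd r₂ i)) (fun j => w (Fin.natAdd r₁ j)) = w := by
  funext k
  refine Fin.addCases (fun i => ?_) (fun j => ?_) k
  · simp [Fin.append_left]
  · simp [Fin.append_right]

def prodSet (r₁ r₂ : ℕ) (A : Set (Fin r₁ → Bool)) (B : Set (Fin r₂ → Bool)) :
    Set (Fin (r₁ + r₂) → Bool) :=
  {w | (fun i => w (Fin.castAdd r₂ i)) ∈ A ∧ (fun j => w (Fin.natAdd r₁ j)) ∈ B}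

lemma subcube_prod {r₁ r₂ a b : ℕ} (ha : a ≤ r₁) (hb : b ≤ r₂)
    {A : Set (Fin r₁ → Bool)} {B : Set (Fin r₂ → Bool)}
    (hA : IsSubcube r₁ a A) (hB : IsSubcube r₂ b B) :
    IsSubcube (r₁ + r₂) (a + b) (prodSet r₁ r₂ A B) := by
  obtain ⟨F₁, v₁, hc₁, hA⟩ := hA
  obtain ⟨F₂, v₂, hc₂, hB⟩ := hB
  refine ⟨F₁.map (Fin.castAddEmb r₂) ∪ F₂.map (Fin.natAddEmb r₁), Fin.addCases v₁ v₂, ?_, ?_⟩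
  · rw [Finset.card_union_of_disjoint, Finset.card_map, Finset.card_map, hc₁, hc₂]
    · omega
    · rw [Finset.disjoint_left]
      rintro k hk hk'
      simp only [Finset.mem_map] at hk hk'
      obtain ⟨i, -, rfl⟩ := hk
      obtain ⟨j, -, hj⟩ := hk'
      have h1 : ((Fin.natAddEmb r₁ j : Fin (r₁ + r₂)) : ℕ) = r₁ + j := rfl
      have h2 : ((Fin.castAddEmb r₂ i : Fin (r₁ + r₂)) : ℕ) = i := rfl
      have := congrArg (Fin.val) hj
      rw [h1, h2] at this
      omega
  · ext w
    simp only [prodSet, hA, hB, Set.mem_setOf_eq, Finset.mem_union, Finset.mem_map]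
    constructor
    · rintro ⟨hwA, hwB⟩ k (⟨i, hi, rfl⟩ | ⟨j, hj, rfl⟩)
      · show w (Fin.castAdd r₂ i) = Fin.addCases v₁ v₂ (Fin.castAdd r₂ i)
        rw [Fin.addCases_left]
        exact hwA i hi
      · show w (Fin.natAdd r₁ j) = Fin.addCases v₁ v₂ (Fin.natAdd r₁ j)
        rw [Fin.addCases_right]
        exact hwB j hj
    · intro h
      constructor
      · intro i hi
        have := h (Fin.castAdd r₂ i) (Or.inl ⟨i, hi, rfl⟩)
        rwa [Fin.addCases_left] at this
      · intro j hj
        have := h (Fin.natAdd r₁ j) (Or.inr ⟨j, hj, rfl⟩)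
        rwa [Fin.addCases_right] at this

lemma prod_union_right {r₁ r₂ : ℕ} {ι : Type*} (A : Set (Fin r₁ → Bool))
    (B : ι → Set (Fin r₂ → Bool)) :
    prodSet r₁ r₂ A (⋃ i, B i) = ⋃ i, prodSet r₁ r₂ A (B i) := by
  ext w; simp only [prodSet, Set.mem_setOf_eq, Set.mem_iUnion]; tauto

lemma prod_union_left {r₁ r₂ : ℕ} {ι : Type*} (A : ι → Set (Fin r₁ → Bool))
    (B : Set (Fin r₂ → Bool)) :
    prodSet r₁ r₂ (⋃ i, A i) B = ⋃ i, prodSet r₁ r₂ (A i) B := by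
  ext w; simp only [prodSet, Set.mem_setOf_eq, Set.mem_iUnion]; tauto

lemma prod_disjoint_right {r₁ r₂ : ℕ} {A : Set (Fin r₁ → Bool)} {B B' : Set (Fin r₂ → Bool)}
    (h : Disjoint B B') : Disjoint (prodSet r₁ r₂ A B) (prodSet r₁ r₂ A B') := by
  rw [Set.disjoint_left] at h ⊢
  rintro w ⟨-, hB⟩ ⟨-, hB'⟩
  exact h hB hB'

lemma prod_disjoint_left {r₁ r₂ : ℕ} {A A' : Set (Fin r₁ → Bool)} {B : Set (Fin r₂ → Bool)}
    (h : Disjoint A A') : Disjoint (prodSet r₁ r₂ A B) (prodSet r₁ r₂ A' B) := by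
  rw [Set.disjoint_left] at h ⊢
  rintro w ⟨hA, -⟩ ⟨hA', -⟩
  exact h hA hA'

lemma prod_nbhd_right {r₁ r₂ : ℕ} {A : Set (Fin r₁ → Bool)} {B B' : Set (Fin r₂ → Bool)}
    (h : B ⊆ nbhd r₂ B') : prodSet r₁ r₂ A B ⊆ nbhd (r₁ + r₂) (prodSet r₁ r₂ A B') := by
  rintro w ⟨hA, hB⟩
  obtain ⟨b', hb', hadj⟩ := h hB
  refine ⟨Fin.append (fun i => w (Fin.castAdd r₂ i)) b', ⟨?_, ?_⟩, ?_⟩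
  · show (fun i => Fin.append _ b' (Fin.castAdd r₂ i)) ∈ A
    simpa [Fin.append_left] using hA
  · show (fun j => Fin.append _ b' (Fin.natAdd r₁ j)) ∈ B'
    simpa [Fin.append_right] using hb'
  · show hammingDist w (Fin.append (fun i => w (Fin.castAdd r₂ i)) b') = 1
    have h := hamming_append (fun i => w (Fin.castAdd r₂ i)) (fun i => w (Fin.castAdd r₂ i))
      (fun j => w (Fin.natAdd r₁ j)) b'
    rw [append_self] at h
    rw [h, hammingDist_self]
    simpa using (show hammingDist _ _ = 1 from hadj)

lemma prod_nbhd_left {r₁ r₂ : ℕ} {A A' : Set (Fin r₁ → Bool)} {B : Set (Fin r₂ → Bool)}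
    (h : A ⊆ nbhd r₁ A') : prodSet r₁ r₂ A B ⊆ nbhd (r₁ + r₂) (prodSet r₁ r₂ A' B) := by
  rintro w ⟨hA, hB⟩
  obtain ⟨a', ha', hadj⟩ := h hA
  refine ⟨Fin.append a' (fun j => w (Fin.natAdd r₁ j)), ⟨?_, ?_⟩, ?_⟩
  · show (fun i => Fin.append a' _ (Fin.castAdd r₂ i)) ∈ A'
    simpa [Fin.append_left] using ha'
  · show (fun j => Fin.append a' _ (Fin.natAdd r₁ j)) ∈ B
    simpa [Fin.append_right] using hB
  · show hammingDist w (Fin.append a' (fun j => w (Fin.natAdd r₁ j))) = 1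
    have h := hamming_append (fun i => w (Fin.castAdd r₂ i)) a'
      (fun j => w (Fin.natAdd r₁ j)) (fun j => w (Fin.natAdd r₁ j))
    rw [append_self] at h
    rw [h, hammingDist_self]
    simpa using (show hammingDist _ _ = 1 from hadj)

lemma IsSubcube.min {r c : ℕ} {S : Set (Fin r → Bool)} (h : IsSubcube r c S) :
    IsSubcube r (min c r) S := by
  obtain ⟨F, v, hc, hS⟩ := h
  exact ⟨F, v, by omega, hS⟩

lemma comp_norm {r : ℕ} {S : Set (Fin r → Bool)} (h : IsCompositeSet r S) :
    ∃ (m : ℕ) (c : Fin m → ℕ) (cube : Fin m → Set (Fin r → Bool)),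
      StrictMono c ∧
      (∀ i, IsSubcube r (c i) (cube i)) ∧
      Pairwise (fun i j => Disjoint (cube i) (cube j)) ∧
      S = ⋃ i, cube i ∧
      (∀ i j, i < j → cube i ⊆ nbhd r (cube j)) ∧
      (∀ i, c i ≤ r) := by
  obtain ⟨m, c, cube, hmono, hsub, hdisj, hun, hnb⟩ := h
  have univ_of : ∀ i : Fin m, r ≤ c i → cube i = Set.univ := by
    intro i hle
    obtain ⟨F, v, hc, hS⟩ := hsub i
    have : F = ∅ := by rw [← Finset.card_eq_zero, hc]; omega
    subst this
    rw [hS]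
    ext w; simp
  have key : ∀ i j : Fin m, i < j → c i < r := by
    intro i j hij
    by_contra hle
    push_neg at hle
    have hj : r ≤ c j := le_of_lt (lt_of_le_of_lt hle (hmono hij))
    have h1 := univ_of i hle
    have h2 := univ_of j hj
    have hd : Disjoint (cube i) (cube j) := hdisj (ne_of_lt hij)
    rw [h1, h2] at hd
    exact Set.disjoint_left.mp hd (Set.mem_univ (fun _ => false)) (Set.mem_univ _)
  refine ⟨m, fun i => min (c i) r, cube, ?_, ?_, hdisj, hun, hnb, fun i => min_le_right _ _⟩
  · intro i j hij
    exact lt_min (lt_of_le_of_lt (min_le_left _ _) (hmono hij)) ((min_le_left _ _).trans_lt (key i j hij))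
  · intro i
    exact (hsub i).min

/-- If `S` and `T` are composite sets of `Q^{r₁}` and `Q^{r₂}` and at least one of
them is a subcube, then `S × T` (under concatenation) is a composite set of
`Q^{r₁+r₂} = Q^{r₁} × Q^{r₂}`. -/
theorem composite_prod (r₁ r₂ : ℕ) (h₁ : 1 ≤ r₁) (h₂ : 1 ≤ r₂)
    (S : Set (Fin r₁ → Bool)) (T : Set (Fin r₂ → Bool))
    (hS : IsCompositeSet r₁ S) (hT : IsCompositeSet r₂ T)
    (hcube : (∃ d, IsSubcube r₁ d S) ∨ (∃ d, IsSubcube r₂ d T)) :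
    IsCompositeSet (r₁ + r₂)
      {w | (fun i => w (Fin.castAdd r₂ i)) ∈ S ∧ (fun j => w (Fin.natAdd r₁ j)) ∈ T} := by
  rcases hcube with ⟨d, hSsub⟩ | ⟨d, hTsub⟩
  · obtain ⟨m, c, cube, hmono, hsub, hdisj, hun, hnb, hle⟩ := comp_norm hT
    refine ⟨m, fun i => min d r₁ + c i, fun i => prodSet r₁ r₂ S (cube i), ?_, ?_, ?_, ?_, ?_⟩
    · intro i j hij
      exact Nat.add_lt_add_left (hmono hij) _
    · intro i
      exact subcube_prod (min_le_right _ _) (hle i) hSsub.min (hsub i)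
    · intro i j hij
      exact prod_disjoint_right (hdisj hij)
    · show prodSet r₁ r₂ S T = _
      rw [hun, prod_union_right]
    · intro i j hij
      exact prod_nbhd_right (hnb i j hij)
  · obtain ⟨m, c, cube, hmono, hsub, hdisj, hun, hnb, hle⟩ := comp_norm hS
    refine ⟨m, fun i => c i + min d r₂, fun i => prodSet r₁ r₂ (cube i) T, ?_, ?_, ?_, ?_, ?_⟩
    · intro i j hij
      exact Nat.add_lt_add_right (hmono hij) _
    · intro i
      exact subcube_prod (hle i) (min_le_right _ _) (hsub i) hTsub.min
    · intro i j hij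
      exact prod_disjoint_left (hdisj hij)
    · show prodSet r₁ r₂ S T = _
      rw [hun, prod_union_left]
    · intro i j hij
      exact prod_nbhd_left (hnb i j hij)
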